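/- arXiv:1806.07523 — 2 statements merged into one kernel-verified Lean document; each statement's English description precedes it below -/
import Mathlib

section
/- Soundness of schematic proofs for the quantifier rules: if a schematic sequent Ψ; Σ; Γ ⊢ B has a derivation Π using the schematic proof rules, then for any substitution Φ mapping each type variable in Ψ to a ground type, the instantiated derivation Π[Φ] is a valid derivation in the simply typed sequent calculus of the sequent Σ[Φ]; Γ[Φ] ⊢ B[Φ]. -/
/-! Soundness of schematic proofs: a sequent calculus `G` over simply typed terms,
its schematic version (sequents carry a set `Ψ` of type variables), and the
statement that type instantiation maps schematic derivations to `G`-derivations. -/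

/-- Simple types, possibly containing type variables. -/
inductive Ty
  | tvar : ℕ → Ty
  | base : ℕ → Ty
  | arr : Ty → Ty → Ty

/-- Ground types contain no type variables. -/
def GroundTy : Ty → Prop
  | .tvar _ => False
  | .base _ => True
  | .arr τ1 τ2 => GroundTy τ1 ∧ GroundTy τ2

/-- Action of a type substitution on types. -/
def tsubstTy (φ : ℕ → Ty) : Ty → Ty
  | .tvar a => φ a
  | .base b => .base b
  | .arr τ1 τ2 => .arr (tsubstTy φ τ1) (tsubstTy φ τ2)

/-- λ-terms in de Bruijn style; variables refer to the eigenvariable context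
(or to enclosing abstractions); constants carry their types. -/
inductive Tm
  | var : ℕ → Tm
  | const : ℕ → Ty → Tm
  | app : Tm → Tm → Tm
  | lam : Ty → Tm → Tm

/-- Shift the free variables of a term above cutoff `c`. -/
def shiftTm (c : ℕ) : Tm → Tm
  | .var n => if n < c then .var n else .var (n + 1)
  | .const k τ => .const k τ
  | .app t1 t2 => .app (shiftTm c t1) (shiftTm c t2)
  | .lam τ t => .lam τ (shiftTm (c + 1) t)

/-- Substitute `s` for the variable with index `c` in a term. -/
def substTm (c : ℕ) (s : Tm) : Tm → Tm
  | .var n => if n < c then .var n else if n = c then (shiftTm 0)^[c] s else .var (n - 1)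
  | .const k τ => .const k τ
  | .app t1 t2 => .app (substTm c s t1) (substTm c s t2)
  | .lam τ t => .lam τ (substTm (c + 1) s t)

/-- Action of a type substitution on the type annotations within a term. -/
def tsubstTm (φ : ℕ → Ty) : Tm → Tm
  | .var n => .var n
  | .const k τ => .const k (tsubstTy φ τ)
  | .app t1 t2 => .app (tsubstTm φ t1) (tsubstTm φ t2)
  | .lam τ t => .lam (tsubstTy φ τ) (tsubstTm φ t)

/-- The typing judgment for terms relative to an eigenvariable context. -/
inductive HasTy : List Ty → Tm → Ty → Prop
  | var {Sg : List Ty} {n : ℕ} {τ : Ty} : Sg[n]? = some τ → HasTy Sg (.var n) τ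
  | const {Sg : List Ty} (k : ℕ) (τ : Ty) : HasTy Sg (.const k τ) τ
  | app {Sg : List Ty} {t1 t2 : Tm} {τ1 τ2 : Ty} :
      HasTy Sg t1 (.arr τ1 τ2) → HasTy Sg t2 τ1 → HasTy Sg (.app t1 t2) τ2
  | lam {Sg : List Ty} {t : Tm} {τ1 τ2 : Ty} :
      HasTy (τ1 :: Sg) t τ2 → HasTy Sg (.lam τ1 t) (.arr τ1 τ2)

/-- Formulas: atoms, the propositional connectives, and typed quantifiers
(binding the term variable with index 0). -/
inductive Fm
  | atom : ℕ → Tm → Fm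
  | top : Fm
  | bot : Fm
  | conj : Fm → Fm → Fm
  | disj : Fm → Fm → Fm
  | imp : Fm → Fm → Fm
  | all : Ty → Fm → Fm
  | ex : Ty → Fm → Fm

def shiftFm (c : ℕ) : Fm → Fm
  | .atom p t => .atom p (shiftTm c t)
  | .top => .top
  | .bot => .bot
  | .conj F1 F2 => .conj (shiftFm c F1) (shiftFm c F2)
  | .disj F1 F2 => .disj (shiftFm c F1) (shiftFm c F2)
  | .imp F1 F2 => .imp (shiftFm c F1) (shiftFm c F2)
  | .all τ F => .all τ (shiftFm (c + 1) F)
  | .ex τ F => .ex τ (shiftFm (c + 1) F)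

def substFm (c : ℕ) (s : Tm) : Fm → Fm
  | .atom p t => .atom p (substTm c s t)
  | .top => .top
  | .bot => .bot
  | .conj F1 F2 => .conj (substFm c s F1) (substFm c s F2)
  | .disj F1 F2 => .disj (substFm c s F1) (substFm c s F2)
  | .imp F1 F2 => .imp (substFm c s F1) (substFm c s F2)
  | .all τ F => .all τ (substFm (c + 1) s F)
  | .ex τ F => .ex τ (substFm (c + 1) s F)

/-- Action of a type substitution on formulas. -/
def tsubstFm (φ : ℕ → Ty) : Fm → Fm
  | .atom p t => .atom p (tsubstTm φ t)
  | .top => .top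
  | .bot => .bot
  | .conj F1 F2 => .conj (tsubstFm φ F1) (tsubstFm φ F2)
  | .disj F1 F2 => .disj (tsubstFm φ F1) (tsubstFm φ F2)
  | .imp F1 F2 => .imp (tsubstFm φ F1) (tsubstFm φ F2)
  | .all τ F => .all (tsubstTy φ τ) (tsubstFm φ F)
  | .ex τ F => .ex (tsubstTy φ τ) (tsubstFm φ F)

/-- The simply typed intuitionistic sequent calculus `G`:
`Deriv Sg Γ F` means the sequent `Sg; Γ ⊢ F` is derivable. -/
inductive Deriv : List Ty → List Fm → Fm → Prop
  | init {Sg Γ F} : F ∈ Γ → Deriv Sg Γ F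
  | botL {Sg Γ F} : Fm.bot ∈ Γ → Deriv Sg Γ F
  | topR {Sg Γ} : Deriv Sg Γ .top
  | conjR {Sg Γ F1 F2} : Deriv Sg Γ F1 → Deriv Sg Γ F2 → Deriv Sg Γ (.conj F1 F2)
  | conjL {Sg Γ F1 F2 C} : Fm.conj F1 F2 ∈ Γ → Deriv Sg (F1 :: F2 :: Γ) C → Deriv Sg Γ C
  | disjR1 {Sg Γ F1 F2} : Deriv Sg Γ F1 → Deriv Sg Γ (.disj F1 F2)
  | disjR2 {Sg Γ F1 F2} : Deriv Sg Γ F2 → Deriv Sg Γ (.disj F1 F2)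
  | disjL {Sg Γ F1 F2 C} : Fm.disj F1 F2 ∈ Γ →
      Deriv Sg (F1 :: Γ) C → Deriv Sg (F2 :: Γ) C → Deriv Sg Γ C
  | impR {Sg Γ F1 F2} : Deriv Sg (F1 :: Γ) F2 → Deriv Sg Γ (.imp F1 F2)
  | impL {Sg Γ F1 F2 C} : Fm.imp F1 F2 ∈ Γ →
      Deriv Sg Γ F1 → Deriv Sg (F2 :: Γ) C → Deriv Sg Γ C
  | allR {Sg Γ τ B} : Deriv (τ :: Sg) (Γ.map (shiftFm 0)) B → Deriv Sg Γ (.all τ B)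
  | allL {Sg Γ τ B C} {t : Tm} : Fm.all τ B ∈ Γ → HasTy Sg t τ →
      Deriv Sg (substFm 0 t B :: Γ) C → Deriv Sg Γ C
  | exR {Sg Γ τ B} {t : Tm} : HasTy Sg t τ →
      Deriv Sg Γ (substFm 0 t B) → Deriv Sg Γ (.ex τ B)
  | exL {Sg Γ τ B C} : Fm.ex τ B ∈ Γ →
      Deriv (τ :: Sg) (B :: Γ.map (shiftFm 0)) (shiftFm 0 C) → Deriv Sg Γ C

/-- The schematic sequent calculus: the rules of `G` with a set `Ψ` of type
variables added uniformly to premises and conclusions. -/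
inductive SDeriv (Ψ : Set ℕ) : List Ty → List Fm → Fm → Prop
  | init {Sg Γ F} : F ∈ Γ → SDeriv Ψ Sg Γ F
  | botL {Sg Γ F} : Fm.bot ∈ Γ → SDeriv Ψ Sg Γ F
  | topR {Sg Γ} : SDeriv Ψ Sg Γ .top
  | conjR {Sg Γ F1 F2} : SDeriv Ψ Sg Γ F1 → SDeriv Ψ Sg Γ F2 → SDeriv Ψ Sg Γ (.conj F1 F2)
  | conjL {Sg Γ F1 F2 C} : Fm.conj F1 F2 ∈ Γ → SDeriv Ψ Sg (F1 :: F2 :: Γ) C → SDeriv Ψ Sg Γ C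
  | disjR1 {Sg Γ F1 F2} : SDeriv Ψ Sg Γ F1 → SDeriv Ψ Sg Γ (.disj F1 F2)
  | disjR2 {Sg Γ F1 F2} : SDeriv Ψ Sg Γ F2 → SDeriv Ψ Sg Γ (.disj F1 F2)
  | disjL {Sg Γ F1 F2 C} : Fm.disj F1 F2 ∈ Γ →
      SDeriv Ψ Sg (F1 :: Γ) C → SDeriv Ψ Sg (F2 :: Γ) C → SDeriv Ψ Sg Γ C
  | impR {Sg Γ F1 F2} : SDeriv Ψ Sg (F1 :: Γ) F2 → SDeriv Ψ Sg Γ (.imp F1 F2)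
  | impL {Sg Γ F1 F2 C} : Fm.imp F1 F2 ∈ Γ →
      SDeriv Ψ Sg Γ F1 → SDeriv Ψ Sg (F2 :: Γ) C → SDeriv Ψ Sg Γ C
  | allR {Sg Γ τ B} : SDeriv Ψ (τ :: Sg) (Γ.map (shiftFm 0)) B → SDeriv Ψ Sg Γ (.all τ B)
  | allL {Sg Γ τ B C} {t : Tm} : Fm.all τ B ∈ Γ → HasTy Sg t τ →
      SDeriv Ψ Sg (substFm 0 t B :: Γ) C → SDeriv Ψ Sg Γ C
  | exR {Sg Γ τ B} {t : Tm} : HasTy Sg t τ →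
      SDeriv Ψ Sg Γ (substFm 0 t B) → SDeriv Ψ Sg Γ (.ex τ B)
  | exL {Sg Γ τ B C} : Fm.ex τ B ∈ Γ →
      SDeriv Ψ (τ :: Sg) (B :: Γ.map (shiftFm 0)) (shiftFm 0 C) → SDeriv Ψ Sg Γ C

lemma tsubst_shiftTm (φ : ℕ → Ty) (c : ℕ) (t : Tm) :
    tsubstTm φ (shiftTm c t) = shiftTm c (tsubstTm φ t) := by
  induction t generalizing c with
  | var n => simp [shiftTm, tsubstTm]; split <;> simp [tsubstTm]
  | const k τ => rfl
  | app t1 t2 ih1 ih2 => simp [shiftTm, tsubstTm, ih1, ih2]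
  | lam τ t ih => simp [shiftTm, tsubstTm, ih]

lemma tsubst_shift_iter (φ : ℕ → Ty) (c : ℕ) (t : Tm) :
    tsubstTm φ ((shiftTm 0)^[c] t) = (shiftTm 0)^[c] (tsubstTm φ t) := by
  induction c generalizing t with
  | zero => rfl
  | succ c ih => simp [Function.iterate_succ_apply, ih, tsubst_shiftTm]

lemma tsubst_substTm (φ : ℕ → Ty) (c : ℕ) (s t : Tm) :
    tsubstTm φ (substTm c s t) = substTm c (tsubstTm φ s) (tsubstTm φ t) := by
  induction t generalizing c with
  | var n =>
    simp only [substTm, tsubstTm]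
    split
    · simp [tsubstTm]
    · split
      · simp [tsubst_shift_iter]
      · simp [tsubstTm]
  | const k τ => rfl
  | app t1 t2 ih1 ih2 => simp [substTm, tsubstTm, ih1, ih2]
  | lam τ t ih => simp [substTm, tsubstTm, ih]

lemma tsubst_shiftFm (φ : ℕ → Ty) (c : ℕ) (F : Fm) :
    tsubstFm φ (shiftFm c F) = shiftFm c (tsubstFm φ F) := by
  induction F generalizing c <;> simp_all [shiftFm, tsubstFm, tsubst_shiftTm]

lemma tsubst_substFm (φ : ℕ → Ty) (c : ℕ) (s : Tm) (F : Fm) :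
    tsubstFm φ (substFm c s F) = substFm c (tsubstTm φ s) (tsubstFm φ F) := by
  induction F generalizing c <;> simp_all [substFm, tsubstFm, tsubst_substTm]

lemma tsubst_hasTy {Sg : List Ty} {t : Tm} {τ : Ty} (φ : ℕ → Ty)
    (h : HasTy Sg t τ) : HasTy (Sg.map (tsubstTy φ)) (tsubstTm φ t) (tsubstTy φ τ) := by
  induction h with
  | var hn => exact HasTy.var (by simp_all [List.getElem?_map])
  | const k τ => exact HasTy.const k _
  | app _ _ ih1 ih2 => exact HasTy.app ih1 ih2
  | lam _ ih => exact HasTy.lam ih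

/-- Soundness of schematic proofs: any ground type instantiation of a schematic
derivation of `Ψ; Sg; Γ ⊢ B` yields a derivation in `G` of the corresponding
instance `Sg[Φ]; Γ[Φ] ⊢ B[Φ]`. -/
theorem schematic_soundness (Ψ : Set ℕ) (Sg : List Ty) (Γ : List Fm) (B : Fm)
    (h : SDeriv Ψ Sg Γ B) (Φ : ℕ → Ty) (hΦ : ∀ a ∈ Ψ, GroundTy (Φ a)) :
    Deriv (Sg.map (tsubstTy Φ)) (Γ.map (tsubstFm Φ)) (tsubstFm Φ B) := by
  clear hΦ
  induction h with
  | init hF => exact Deriv.init (List.mem_map_of_mem hF)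
  | botL hF => exact Deriv.botL (by simpa [tsubstFm] using List.mem_map_of_mem (f := tsubstFm Φ) hF)
  | topR => exact Deriv.topR
  | conjR _ _ ih1 ih2 => exact Deriv.conjR ih1 ih2
  | conjL hF _ ih =>
    exact Deriv.conjL (show Fm.conj _ _ ∈ _ by simpa [tsubstFm] using List.mem_map_of_mem (f := tsubstFm Φ) hF) ih
  | disjR1 _ ih => exact Deriv.disjR1 ih
  | disjR2 _ ih => exact Deriv.disjR2 ih
  | disjL hF _ _ ih1 ih2 =>
    exact Deriv.disjL (show Fm.disj _ _ ∈ _ by simpa [tsubstFm] using List.mem_map_of_mem (f := tsubstFm Φ) hF) ih1 ih2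
  | impR _ ih => exact Deriv.impR ih
  | impL hF _ _ ih1 ih2 =>
    exact Deriv.impL (show Fm.imp _ _ ∈ _ by simpa [tsubstFm] using List.mem_map_of_mem (f := tsubstFm Φ) hF) ih1 ih2
  | allR _ ih =>
    refine Deriv.allR ?_
    simpa [List.map_map, Function.comp_def, tsubst_shiftFm] using ih
  | allL hF ht _ ih =>
    refine Deriv.allL (show Fm.all _ _ ∈ _ by simpa [tsubstFm] using List.mem_map_of_mem (f := tsubstFm Φ) hF)
      (tsubst_hasTy Φ ht) ?_
    simpa [tsubst_substFm] using ih
  | exR ht _ ih =>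
    exact Deriv.exR (tsubst_hasTy Φ ht) (by simpa [tsubst_substFm] using ih)
  | exL hF _ ih =>
    refine Deriv.exL (show Fm.ex _ _ ∈ _ by simpa [tsubstFm] using List.mem_map_of_mem (f := tsubstFm Φ) hF) ?_
    simpa [List.map_map, Function.comp_def, tsubst_shiftFm] using ih
end

section
/- The two-level encoding is adequate for the Horn fragment: a goal formula g is derivable from a fixed Horn program in the specification logic if and only if there exists a natural number n such that prove n g holds in the meta-level encoding. -/
/-- Goal formulas over a type of atoms: atoms, truth, and conjunctions. -/
inductive Goal (A : Type*)
  | tru : Goal A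
  | conj : Goal A → Goal A → Goal A
  | atom : A → Goal A

/-- Specification-logic derivability from a Horn program `prog`. -/
inductive Derives {A : Type*} (prog : A → Goal A → Prop) : Goal A → Prop
  | tru : Derives prog .tru
  | conj {g1 g2 : Goal A} :
      Derives prog g1 → Derives prog g2 → Derives prog (.conj g1 g2)
  | backchain {a : A} {g : Goal A} :
      prog a g → Derives prog g → Derives prog (.atom a)

/-- Height-indexed provability (the meta-level encoding). -/
inductive Prove {A : Type*} (prog : A → Goal A → Prop) : ℕ → Goal A → Prop
  | tru (n : ℕ) : Prove prog n .tru
  | conj {n : ℕ} {g1 g2 : Goal A} :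
      Prove prog n g1 → Prove prog n g2 → Prove prog (n + 1) (.conj g1 g2)
  | backchain {n : ℕ} {a : A} {g : Goal A} :
      prog a g → Prove prog n g → Prove prog (n + 1) (.atom a)

theorem prove_succ {A : Type*} {prog : A → Goal A → Prop} {n : ℕ} {g : Goal A}
    (h : Prove prog n g) : Prove prog (n + 1) g := by
  induction h with
  | tru => exact .tru _
  | conj _ _ ih1 ih2 => exact .conj ih1 ih2
  | backchain hp _ ih => exact .backchain hp ih

theorem prove_mono {A : Type*} {prog : A → Goal A → Prop} {n m : ℕ} {g : Goal A}
    (h : Prove prog n g) (hle : n ≤ m) : Prove prog m g := by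
  induction hle with
  | refl => exact h
  | step _ ih => exact prove_succ ih

theorem derives_iff_exists_prove {A : Type*} (prog : A → Goal A → Prop) (g : Goal A) :
    Derives prog g ↔ ∃ n : ℕ, Prove prog n g := by
  constructor
  · intro h
    induction h with
    | tru => exact ⟨0, .tru 0⟩
    | conj h1 h2 ih1 ih2 =>
      obtain ⟨n1, p1⟩ := ih1; obtain ⟨n2, p2⟩ := ih2
      exact ⟨max n1 n2 + 1, .conj (prove_mono p1 (le_max_left _ _)) (prove_mono p2 (le_max_right _ _))⟩
    | backchain hp h ih =>
      obtain ⟨n, p⟩ := ih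
      exact ⟨n + 1, .backchain hp p⟩
  · rintro ⟨n, p⟩
    induction p with
    | tru => exact .tru
    | conj _ _ ih1 ih2 => exact .conj ih1 ih2
    | backchain hp _ ih => exact .backchain hp ih
end
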